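/- Let (d_n)_{n≥1} be the sequence with d_n = 3^{-i} whenever 2^{i-1} ≤ n < 2^i (i ≥ 1), and let S be the unique continuous linear operator on the real Banach space ℓ¹ satisfying S e_1 = −3 Σ_{n≥1} d_n e_n and S e_n = 3 e_{⌊n/2⌋} for all n ≥ 2. Then the vector x := −3 Σ_{n≥1} d_n e_n (= S e_1) is a fixed point of S, i.e. S x = x. -/

import Mathlib

set_option maxHeartbeats 1000000
open scoped ENNReal


/-- The canonical unit vectors `eVec n` (for `n ≥ 1`) of the real Banach space
`ℓ¹ = ℓ¹(ℕ⁺, ℝ)` of absolutely summable real sequences. -/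
noncomputable def eVec (n : ℕ+) : lp (fun _ : ℕ+ => ℝ) 1 := lp.single 1 n 1

/-- Let `(dₙ)` be the sequence with `dₙ = 3⁻ⁱ` whenever
`2^(i-1) ≤ n < 2^i` (`i ≥ 1`), and let `S` be the (unique) continuous linear operator
on `ℓ¹` with `S e₁ = −3 ∑ₙ dₙ eₙ` and `S eₙ = 3 e⌊n/2⌋` for `n ≥ 2`.  Then the vector
`x := −3 ∑ₙ dₙ eₙ (= S e₁)` is a fixed point of `S`, i.e. `S x = x`. -/
theorem stmt_12 (d : ℕ+ → ℝ)
    (hd : ∀ (i : ℕ) (n : ℕ+), 1 ≤ i → 2 ^ (i - 1) ≤ (n : ℕ) → (n : ℕ) < 2 ^ i →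
      d n = ((3 : ℝ) ^ i)⁻¹)
    (S : lp (fun _ : ℕ+ => ℝ) 1 →L[ℝ] lp (fun _ : ℕ+ => ℝ) 1)
    (hS1 : S (eVec 1) = (-3 : ℝ) • ∑' n : ℕ+, d n • eVec n)
    (hSn : ∀ n k : ℕ+, 2 ≤ (n : ℕ) → (k : ℕ) = (n : ℕ) / 2 →
      S (eVec n) = (3 : ℝ) • eVec k) :
    S ((-3 : ℝ) • ∑' n : ℕ+, d n • eVec n) = (-3 : ℝ) • ∑' n : ℕ+, d n • eVec n := by
  haveI : Fact ((1:ENNReal) ≤ 1) := ⟨le_rfl⟩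
  set f : ℕ+ → lp (fun _ : ℕ+ => ℝ) 1 := fun n => d n • eVec n with hfdef
  -- basic block description via Nat.log
  have hblock : ∀ n : ℕ+, 2 ^ (Nat.log 2 (n:ℕ)) ≤ (n:ℕ) ∧ (n:ℕ) < 2 ^ (Nat.log 2 (n:ℕ) + 1) :=
    fun n => ⟨Nat.pow_log_le_self 2 n.pos.ne', Nat.lt_pow_succ_log_self one_lt_two _⟩
  have hdval : ∀ n : ℕ+, d n = ((3:ℝ) ^ (Nat.log 2 (n:ℕ) + 1))⁻¹ := by
    intro n
    obtain ⟨h1, h2⟩ := hblock n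
    exact hd _ n (Nat.le_add_left 1 _) (by simpa using h1) h2
  have hdnonneg : ∀ n : ℕ+, 0 ≤ d n := fun n => by rw [hdval n]; positivity
  have hdhalf : ∀ (k n : ℕ+), ((n:ℕ) = 2*(k:ℕ) ∨ (n:ℕ) = 2*(k:ℕ)+1) → d n = 3⁻¹ * d k := by
    intro k n hn
    obtain ⟨h1, h2⟩ := hblock k
    set i := Nat.log 2 (k:ℕ) with hi
    have hk : d k = ((3:ℝ)^(i+1))⁻¹ := hdval k
    have hn' : d n = ((3:ℝ)^(i+2))⁻¹ := by
      apply hd (i+2) n (by omega)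
      · have h : (2:ℕ)^(i+1) = 2^i*2 := pow_succ 2 i
        have h' : i+2-1 = i+1 := rfl
        rw [h']; omega
      · have : (2:ℕ)^(i+2) = 2 * (2^(i+1)) := by rw [pow_succ]; ring
        have h2' : (2:ℕ)^(i+1) = 2 * 2^i := by rw [pow_succ]; ring
        omega
    rw [hn', hk]
    rw [show i+2 = (i+1)+1 from rfl, pow_succ, mul_inv]
    ring
  have hnorm : ∀ n : ℕ+, ‖eVec n‖ = 1 := by
    intro n
    have := lp.norm_single (E := fun _ : ℕ+ => ℝ) (p := (1:ℝ≥0∞)) (by norm_num) n (1:ℝ)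
    simpa [eVec] using this
  -- summability of d
  have h32 : (2:ℝ) ^ ((3:ℝ)/2) ≤ 3 := by
    have h0 : (0:ℝ) ≤ (2:ℝ) ^ ((3:ℝ)/2) := Real.rpow_nonneg (by norm_num) _
    rw [← pow_le_pow_iff_left₀ h0 (by norm_num : (0:ℝ) ≤ 3) (two_ne_zero)]
    rw [← Real.rpow_natCast ((2:ℝ) ^ ((3:ℝ)/2)) 2, ← Real.rpow_mul (by norm_num)]
    rw [show (3:ℝ)/2*(2:ℕ) = ((3:ℕ):ℝ) by norm_num, Real.rpow_natCast]
    norm_num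
  have hdle : ∀ n : ℕ+, d n ≤ 1 / ((n:ℕ):ℝ) ^ ((3:ℝ)/2) := by
    intro n
    obtain ⟨h1, h2⟩ := hblock n
    set i := Nat.log 2 (n:ℕ) + 1 with hi
    have hle : ((n:ℕ):ℝ) ^ ((3:ℝ)/2) ≤ (3:ℝ) ^ i := by
      calc ((n:ℕ):ℝ) ^ ((3:ℝ)/2) ≤ (((2:ℝ)^i)) ^ ((3:ℝ)/2) := by
            apply Real.rpow_le_rpow (by positivity) _ (by norm_num)
            exact_mod_cast h2.le
        _ = ((2:ℝ) ^ ((3:ℝ)/2)) ^ i := by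
            rw [← Real.rpow_natCast (2:ℝ) i, ← Real.rpow_mul (by norm_num),
              ← Real.rpow_natCast ((2:ℝ) ^ ((3:ℝ)/2)) i, ← Real.rpow_mul (by norm_num)]
            ring_nf
        _ ≤ (3:ℝ) ^ i := pow_le_pow_left₀ (Real.rpow_nonneg (by norm_num) _) h32 i
    rw [hdval n, ← hi, one_div]
    apply inv_anti₀ _ hle
    positivity
  have hdsum : Summable d := by
    have hs : Summable (fun n : ℕ => 1 / (n:ℝ) ^ ((3:ℝ)/2)) :=
      Real.summable_one_div_nat_rpow.2 (by norm_num)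
    have hs' : Summable (fun n : ℕ+ => 1 / ((n:ℕ):ℝ) ^ ((3:ℝ)/2)) :=
      hs.comp_injective (fun a b h => PNat.coe_injective h)
    exact Summable.of_nonneg_of_le hdnonneg hdle hs'
  have hnormf : ∀ n : ℕ+, ‖f n‖ = d n := by
    intro n
    rw [hfdef]
    simp only [norm_smul, hnorm n, mul_one, Real.norm_eq_abs, abs_of_nonneg (hdnonneg n)]
  have hsumf : Summable f := by
    apply Summable.of_norm
    simpa only [hnormf] using hdsum
  set t : lp (fun _ : ℕ+ => ℝ) 1 := ∑' n, f n with htdef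
  have ht : HasSum f t := hsumf.hasSum
  have hg : Summable (fun n => S (f n)) := hsumf.map S S.continuous
  -- value at 1
  have hd1 : d 1 = (3:ℝ)⁻¹ := by simpa using hd 1 1 le_rfl (by norm_num) (by norm_num)
  have hg1 : S (f 1) = -t := by
    rw [hfdef]
    simp only [map_smul, hS1, hd1, smul_smul]
    norm_num
  have h2n : ∀ n : ℕ+, n ≠ 1 → 2 ≤ (n:ℕ) := by
    intro n hne
    by_contra h
    push_neg at h
    have hp := n.pos
    exact hne (PNat.coe_injective (by rw [PNat.one_coe]; omega))
  -- value elsewhere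
  have hgn : ∀ n : ℕ+, n ≠ 1 → ∀ k : ℕ+, (k:ℕ) = (n:ℕ)/2 → S (f n) = f k := by
    intro n hne k hk
    have hb : 2 ≤ (n:ℕ) := h2n n hne
    have hpar : (n:ℕ) = 2*(k:ℕ) ∨ (n:ℕ) = 2*(k:ℕ)+1 := by omega
    rw [hfdef]
    simp only [map_smul, hSn n k hb hk, smul_smul, hdhalf k n hpar]
    congr 1
    ring
  -- the doubling injection
  set χ : ℕ+ × Bool → ℕ+ := fun p =>
      ⟨2*(p.1:ℕ) + cond p.2 1 0, by
        cases p with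
        | mk k b =>
          have := k.pos
          cases b <;> simp only [Bool.cond_false, Bool.cond_true] <;> omega⟩
    with hχdef
  have hχcoe : ∀ (k : ℕ+) (b : Bool), ((χ (k, b) : ℕ+) : ℕ) = 2*(k:ℕ) + cond b 1 0 :=
    fun k b => rfl
  have hχne1 : ∀ p, χ p ≠ 1 := by
    rintro ⟨k, b⟩ h
    have h' : ((χ (k, b) : ℕ+) : ℕ) = 1 := by rw [h, PNat.one_coe]
    rw [hχcoe] at h'
    have hp := k.pos
    cases b <;> simp only [Bool.cond_false, Bool.cond_true] at h' <;> omega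
  have hχinj : Function.Injective χ := by
    rintro ⟨k, b⟩ ⟨l, c⟩ h
    have h' : ((χ (k, b) : ℕ+) : ℕ) = ((χ (l, c) : ℕ+) : ℕ) := by rw [h]
    rw [hχcoe, hχcoe] at h'
    cases b <;> cases c <;> simp only [Bool.cond_false, Bool.cond_true] at h' <;>
      first
      | (exfalso; omega)
      | (have hkl : k = l := PNat.coe_injective (by omega); rw [hkl])
  have hχzero : ∀ n : ℕ+, n ∉ Set.range χ → (if n = 1 then (0 : lp (fun _ : ℕ+ => ℝ) 1) else S (f n)) = 0 := by
    intro n hn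
    by_cases h1 : n = 1
    · simp [h1]
    · exfalso
      apply hn
      have hb : 2 ≤ (n:ℕ) := h2n n h1
      refine ⟨((⟨(n:ℕ)/2, by omega⟩ : ℕ+), decide ((n:ℕ) % 2 = 1)), ?_⟩
      apply PNat.coe_injective
      erw [hχcoe]
      rcases Nat.even_or_odd (n:ℕ) with he | ho
      · obtain ⟨m, hm⟩ := he
        simp only [PNat.mk_coe]
        have : ¬ ((n:ℕ) % 2 = 1) := by omega
        simp [this]; omega
      · obtain ⟨m, hm⟩ := ho
        simp only [PNat.mk_coe]
        have : (n:ℕ) % 2 = 1 := by omega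
        simp [this]; omega
  have hcomp : ∀ p : ℕ+ × Bool,
      (if χ p = 1 then (0 : lp (fun _ : ℕ+ => ℝ) 1) else S (f (χ p))) = f p.1 := by
    intro p
    rw [if_neg (hχne1 p)]
    apply hgn (χ p) (hχne1 p) p.1
    rw [hχcoe]
    cases p.2 <;> simp <;> omega
  -- summability over the product
  have hF : Summable (fun p : ℕ+ × Bool => f p.1) := by
    apply Summable.of_norm
    have : (fun p : ℕ+ × Bool => ‖f p.1‖) = fun p : ℕ+ × Bool => d p.1 * (fun _ : Bool => (1:ℝ)) p.2 := by
      funext p; simp [hnormf]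
    rw [this]
    exact hdsum.mul_of_nonneg (hasSum_fintype (fun _ : Bool => (1:ℝ))).summable
      hdnonneg (fun _ => zero_le_one)
  have hFt : HasSum (fun p : ℕ+ × Bool => f p.1) (t + t) := by
    have h1 : ∀ k : ℕ+, HasSum (fun _ : Bool => f k) (f k + f k) := by
      intro k
      have := hasSum_fintype (fun _ : Bool => f k)
      simpa [two_smul] using this
    have h2 : HasSum (fun k : ℕ+ => f k + f k) (∑' p : ℕ+ × Bool, f p.1) :=
      hF.hasSum.prod_fiberwise h1
    have h3 : HasSum (fun k : ℕ+ => f k + f k) (t + t) := ht.add ht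
    have h4 := h2.unique h3
    rw [← h4]
    exact hF.hasSum
  have hsum2 : HasSum (fun n : ℕ+ => if n = 1 then (0 : lp (fun _ : ℕ+ => ℝ) 1) else S (f n)) (t + t) := by
    rw [← Function.Injective.hasSum_iff hχinj hχzero]
    have : ((fun n : ℕ+ => if n = 1 then (0 : lp (fun _ : ℕ+ => ℝ) 1) else S (f n)) ∘ χ)
        = fun p : ℕ+ × Bool => f p.1 := funext fun p => hcomp p
    rw [this]
    exact hFt
  have hsplit : ∑' n, S (f n) = S (f 1) + ∑' n : ℕ+, (if n = 1 then (0 : lp (fun _ : ℕ+ => ℝ) 1) else S (f n)) := by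
    have := Summable.tsum_eq_add_tsum_ite hg 1
    simpa using this
  have hSt : S t = t := by
    rw [htdef, ContinuousLinearMap.map_tsum S hsumf, hsplit, hsum2.tsum_eq, hg1]
    abel
  rw [map_smul, hSt]
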